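/- Let Σ(t) satisfy the Lyapunov differential equation Σ̇ = (A - BB'Π)Σ + Σ(A - BB'Π)' + B₁B₁' and Π(t) satisfy the Riccati equation Π̇ = -A'Π - ΠA + ΠBB'Π, with Σ(t) invertible for all t. Then H(t) := Σ(t)⁻¹ - Π(t) satisfies Ḣ = -A'H - HA - HBB'H + (Π+H)(BB' - B₁B₁')(Π+H). -/

import Mathlib

open Matrix

attribute [local instance] Matrix.linftyOpNormedAddCommGroup Matrix.linftyOpNormedSpace
  Matrix.linftyOpNormedRing Matrix.linftyOpNormedAlgebra

private lemma matrix_decomp {n m : ℕ} (M : Matrix (Fin n) (Fin m) ℝ) :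
    M = ∑ i : Fin n, ∑ j : Fin m, M i j • single i j (1:ℝ) := by
  ext i j
  simp only [Matrix.sum_apply, Matrix.smul_apply, Matrix.single, Matrix.of_apply,
    smul_eq_mul, mul_ite, mul_one, mul_zero]
  rw [Finset.sum_eq_single i, Finset.sum_eq_single j] <;> simp +contextual [eq_comm]

private lemma hasDerivAt_matrix {n m : ℕ} {f : ℝ → Matrix (Fin n) (Fin m) ℝ}
    {D : Matrix (Fin n) (Fin m) ℝ} {t : ℝ}
    (h : ∀ i j, HasDerivAt (fun s => f s i j) (D i j) t) :
    HasDerivAt f D t := by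
  have h2 : HasDerivAt (fun s => ∑ i : Fin n, ∑ j : Fin m, f s i j • single i j (1:ℝ))
      (∑ i : Fin n, ∑ j : Fin m, D i j • single i j (1:ℝ)) t := by
    apply HasDerivAt.fun_sum
    intro i _
    apply HasDerivAt.fun_sum
    intro j _
    exact (h i j).smul_const _
  have := h2
  rw [← matrix_decomp D] at this
  convert this using 1
  funext s
  exact matrix_decomp (f s)

example : True := trivial

private lemma hasDerivAt_entry {n m : ℕ} {f : ℝ → Matrix (Fin n) (Fin m) ℝ}
    {D : Matrix (Fin n) (Fin m) ℝ} {t : ℝ} (h : HasDerivAt f D t) (i : Fin n) (j : Fin m) :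
    HasDerivAt (fun s => f s i j) (D i j) t := by
  let E : Matrix (Fin n) (Fin m) ℝ →L[ℝ] ℝ :=
    LinearMap.toContinuousLinearMap
      ((LinearMap.proj j).comp (LinearMap.proj (R := ℝ) (φ := fun _ : Fin n => Fin m → ℝ) i))
  exact (E.hasFDerivAt.comp_hasDerivAt t h)

private lemma ringid {R : Type*} [Ring R] (A At BB Q P St K : R)
    (h1 : St * K = 1) (h2 : K * St = 1) :
    -(K * ((A - BB * P) * St + St * (At - P * BB) + Q) * K)
      - (-At * P - P * A + P * BB * P)
    = -At * (K - P) - (K - P) * A - (K - P) * BB * (K - P)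
      + (P + (K - P)) * (BB - Q) * (P + (K - P)) := by
  have e1 : K * ((A - BB * P) * St) * K = K * (A - BB * P) := by
    have : K * ((A - BB * P) * St) * K = K * (A - BB * P) * (St * K) := by noncomm_ring
    rw [this, h1, mul_one]
  have e2 : K * (St * (At - P * BB)) * K = (At - P * BB) * K := by
    have : K * (St * (At - P * BB)) * K = (K * St) * ((At - P * BB) * K) := by noncomm_ring
    rw [this, h2, one_mul]
  have expand : K * ((A - BB * P) * St + St * (At - P * BB) + Q) * K
      = K * ((A - BB * P) * St) * K + K * (St * (At - P * BB)) * K + K * Q * K := by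
    noncomm_ring
  rw [expand, e1, e2]
  noncomm_ring

/-- If Σ satisfies the closed-loop Lyapunov ODE and Π the Riccati ODE, with Σ(t)
invertible for all t, then H = Σ⁻¹ - Π satisfies the stated matrix Riccati-type ODE. -/
theorem stmt_0 {n m p : ℕ}
    (A : ℝ → Matrix (Fin n) (Fin n) ℝ) (B : ℝ → Matrix (Fin n) (Fin m) ℝ)
    (B₁ : ℝ → Matrix (Fin n) (Fin p) ℝ)
    (S Pi : ℝ → Matrix (Fin n) (Fin n) ℝ)
    (hAc : ∀ i j, Continuous fun t => A t i j)
    (hBc : ∀ i j, Continuous fun t => B t i j)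
    (hB₁c : ∀ i j, Continuous fun t => B₁ t i j)
    (hSsym : ∀ t, (S t)ᵀ = S t) (hPisym : ∀ t, (Pi t)ᵀ = Pi t)
    (hSinv : ∀ t, IsUnit (S t))
    (hS : ∀ t i j, HasDerivAt (fun s => S s i j)
      (((A t - B t * (B t)ᵀ * Pi t) * S t + S t * (A t - B t * (B t)ᵀ * Pi t)ᵀ
        + B₁ t * (B₁ t)ᵀ) i j) t)
    (hPi : ∀ t i j, HasDerivAt (fun s => Pi s i j)
      ((-(A t)ᵀ * Pi t - Pi t * A t + Pi t * (B t * (B t)ᵀ) * Pi t) i j) t) :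
    ∀ t i j, HasDerivAt (fun s => ((S s)⁻¹ - Pi s) i j)
      ((-(A t)ᵀ * ((S t)⁻¹ - Pi t) - ((S t)⁻¹ - Pi t) * A t
        - ((S t)⁻¹ - Pi t) * (B t * (B t)ᵀ) * ((S t)⁻¹ - Pi t)
        + (Pi t + ((S t)⁻¹ - Pi t)) * (B t * (B t)ᵀ - B₁ t * (B₁ t)ᵀ)
          * (Pi t + ((S t)⁻¹ - Pi t))) i j) t := by
  intro t
  have hdet : IsUnit (S t).det := (Matrix.isUnit_iff_isUnit_det _).mp (hSinv t)
  have hSK : S t * (S t)⁻¹ = 1 := Matrix.mul_nonsing_inv _ hdet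
  have hKS : (S t)⁻¹ * S t = 1 := Matrix.nonsing_inv_mul _ hdet
  have hSmat : HasDerivAt S
      ((A t - B t * (B t)ᵀ * Pi t) * S t + S t * (A t - B t * (B t)ᵀ * Pi t)ᵀ
        + B₁ t * (B₁ t)ᵀ) t := hasDerivAt_matrix (hS t)
  have hPimat : HasDerivAt Pi
      (-(A t)ᵀ * Pi t - Pi t * A t + Pi t * (B t * (B t)ᵀ) * Pi t) t :=
    hasDerivAt_matrix (hPi t)
  have hu := hasFDerivAt_ringInverse (𝕜 := ℝ) (hSinv t).unit
  rw [IsUnit.unit_spec] at hu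
  have hval : (((hSinv t).unit⁻¹ : (Matrix (Fin n) (Fin n) ℝ)ˣ) : Matrix (Fin n) (Fin n) ℝ)
      = (S t)⁻¹ := by
    have h' := Ring.inverse_unit (hSinv t).unit
    rw [(hSinv t).unit_spec] at h'
    rw [← h']
    exact (Matrix.nonsing_inv_eq_ringInverse _).symm
  have hinv0 := hu.comp_hasDerivAt t hSmat
  simp only [ContinuousLinearMap.neg_apply, ContinuousLinearMap.mulLeftRight_apply, hval,
    Function.comp_def, ← Matrix.nonsing_inv_eq_ringInverse] at hinv0
  have hH := hinv0.sub hPimat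
  have key : -((S t)⁻¹ * ((A t - B t * (B t)ᵀ * Pi t) * S t
        + S t * (A t - B t * (B t)ᵀ * Pi t)ᵀ + B₁ t * (B₁ t)ᵀ) * (S t)⁻¹)
      - (-(A t)ᵀ * Pi t - Pi t * A t + Pi t * (B t * (B t)ᵀ) * Pi t)
      = -(A t)ᵀ * ((S t)⁻¹ - Pi t) - ((S t)⁻¹ - Pi t) * A t
        - ((S t)⁻¹ - Pi t) * (B t * (B t)ᵀ) * ((S t)⁻¹ - Pi t)
        + (Pi t + ((S t)⁻¹ - Pi t)) * (B t * (B t)ᵀ - B₁ t * (B₁ t)ᵀ)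
          * (Pi t + ((S t)⁻¹ - Pi t)) := by
    have ht : (A t - B t * (B t)ᵀ * Pi t)ᵀ = (A t)ᵀ - Pi t * (B t * (B t)ᵀ) := by
      simp [Matrix.transpose_sub, Matrix.transpose_mul, Matrix.transpose_transpose,
        hPisym t, Matrix.mul_assoc]
    rw [ht]
    exact ringid (A t) ((A t)ᵀ) (B t * (B t)ᵀ) (B₁ t * (B₁ t)ᵀ) (Pi t) (S t) ((S t)⁻¹) hSK hKS
  rw [key] at hH
  intro i j
  exact hasDerivAt_entry hH i j
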